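/- Let A be a small preadditive category, let (C,T,F) be a TTF triple in Mod A, and let c : Mod A → Mod A be the torsion radical of the torsion pair (C,T). Then: (1) the ideal c(A) of A defined by c(A)(a,b) := c(H_b)(a) coincides with the ideal I_T given by I_T(a,b) := {r ∈ A(a,b) : T(r) = 0 for all T ∈ T}; (2) the ideal I_T is idempotent. -/

import Mathlib

open CategoryTheory CategoryTheory.Limits Opposite
noncomputable section
universe u
variable (A : Type u) [SmallCategory A] [Preadditive A]

abbrev PMod := Aᵒᵖ ⥤ AddCommGrpCat.{u}

def Hrep (b : A) : PMod A where
  obj a := AddCommGrpCat.of (unop a ⟶ b)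
  map f := AddCommGrpCat.ofHom (AddMonoidHom.mk' (fun g => f.unop ≫ g)
    (fun g h => Preadditive.comp_add _ _ _ _ _ _))
  map_id a := by ext g; simp
  map_comp f g := by
    ext h
    show (f ≫ g).unop ≫ h = g.unop ≫ f.unop ≫ h
    simp

def toH {a b : A} (γ : a ⟶ b) : ((Hrep A b).obj (op a)) := γ

def Hmap {b b' : A} (r : b ⟶ b') : Hrep A b ⟶ Hrep A b' where
  app a := AddCommGrpCat.ofHom (AddMonoidHom.mk' (fun g => g ≫ r)
    (fun g h => Preadditive.add_comp _ _ _ _ _ _))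
  naturality a a' f := by
    ext g
    show (f.unop ≫ g) ≫ r = f.unop ≫ g ≫ r
    exact Category.assoc _ _ _

def inSub {M : PMod A} (R : Subobject M) {a : A} (x : M.obj (op a)) : Prop :=
  ∃ y, R.arrow.app (op a) y = x


/-- A two-sided ideal of the preadditive category `A`. -/
structure CatIdeal : Type u where
  carrier : ∀ a b : A, AddSubgroup (a ⟶ b)
  comp_mem_left : ∀ {a b c : A} (f : a ⟶ b) (g : b ⟶ c), f ∈ carrier a b → f ≫ g ∈ carrier a c
  comp_mem_right : ∀ {a b c : A} (f : a ⟶ b) (g : b ⟶ c), g ∈ carrier b c → f ≫ g ∈ carrier a c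

/-- The product of two ideals: finite sums of composites. -/
def idealMul (I J : CatIdeal A) : ∀ a b : A, AddSubgroup (a ⟶ b) := fun a b =>
  AddSubgroup.closure
    {u | ∃ (c : A) (ψ : a ⟶ c) (φ : c ⟶ b), ψ ∈ J.carrier a c ∧ φ ∈ I.carrier c b ∧ u = ψ ≫ φ}

def CatIdeal.IsIdempotent (I : CatIdeal A) : Prop :=
  ∀ a b : A, idealMul A I I a b = I.carrier a b

def IsTorsionPair (T F : Set (PMod A)) : Prop :=
  T = {X | X.Additive ∧ ∀ Y ∈ F, ∀ f : X ⟶ Y, f = 0} ∧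
  F = {X | X.Additive ∧ ∀ Y ∈ T, ∀ f : Y ⟶ X, f = 0} ∧
  ∀ X : PMod A, X.Additive →
    ∃ (Z : PMod A) (p : X ⟶ Z), Z ∈ F ∧ Epi p ∧ kernel p ∈ T

/-- A TTF triple: both `(C, T)` and `(T, F)` are torsion pairs. -/
def IsTTFTriple (C T F : Set (PMod A)) : Prop :=
  IsTorsionPair A C T ∧ IsTorsionPair A T F

/-- `t` is the torsion radical of `M` with respect to the torsion class `Tc`:
the largest subobject of `M` belonging to `Tc`. -/
def IsTorsionRadicalSub (Tc : Set (PMod A)) (M : PMod A) (t : Subobject M) : Prop :=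
  ((t : PMod A) ∈ Tc) ∧ ∀ s : Subobject M, ((s : PMod A) ∈ Tc) → s ≤ t

section Aux
variable {A}

lemma hrep_additive (b : A) : (Hrep A b).Additive := by
  constructor
  intro X Y f g
  ext h
  show (f + g).unop ≫ h = f.unop ≫ h + g.unop ≫ h
  rw [unop_add]
  exact Preadditive.add_comp _ _ _ _ _ _

lemma mem_of_iso_left {C T : Set (PMod A)}
    (hCeq : C = {X : PMod A | X.Additive ∧ ∀ Y ∈ T, ∀ f : X ⟶ Y, f = 0})
    {X Y : PMod A} (e : X ≅ Y) (hX : X ∈ C) : Y ∈ C := by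
  rw [hCeq] at hX ⊢
  obtain ⟨hadd, hz⟩ := hX
  refine ⟨by haveI := hadd; exact Functor.additive_of_iso e, ?_⟩
  intro M hM f
  have h0 : e.hom ≫ f = 0 := hz M hM _
  calc f = e.inv ≫ e.hom ≫ f := by rw [e.inv_hom_id_assoc]
    _ = 0 := by rw [h0, comp_zero]


/-- The Yoneda natural transformation `Hrep A b ⟶ M` determined by `x : M.obj (op b)`. -/
def yonedaHom (M : PMod A) [M.Additive] (b : A) (x : M.obj (op b)) : Hrep A b ⟶ M where
  app a' := AddCommGrpCat.ofHom (AddMonoidHom.mk' (fun g => M.map g.op x) (fun g h => by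
    show M.map (g + h).op x = M.map g.op x + M.map h.op x
    rw [op_add, M.map_add]
    rfl))
  naturality a' a'' f := by
    ext g
    show M.map (f.unop ≫ g).op x = M.map f (M.map g.op x)
    rw [show (f.unop ≫ g).op = (Quiver.Hom.op (g : unop a' ⟶ b)) ≫ f from rfl, M.map_comp]
    rfl

lemma part1_fwd {C T F : Set (PMod A)} (httf : IsTTFTriple A C T F)
    {c : (M : PMod A) → Subobject M}
    (hc : ∀ M : PMod A, M.Additive → IsTorsionRadicalSub A C M (c M))
    {a b : A} (r : a ⟶ b) (h : inSub A (c (Hrep A b)) (toH A r)) :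
    ∀ M ∈ T, M.map r.op = 0 := by
  intro M hM
  haveI hMadd : M.Additive := (httf.1.2.1 ▸ hM : M ∈ {X : PMod A | X.Additive ∧ _}).1
  ext x
  obtain ⟨y, hy⟩ := h
  have hCmem := (hc (Hrep A b) (hrep_additive b)).1
  rw [httf.1.1] at hCmem
  have hz : (c (Hrep A b)).arrow ≫ yonedaHom M b x = 0 := hCmem.2 M hM _
  have h2 : ((c (Hrep A b)).arrow ≫ yonedaHom M b x).app (op a) y = 0 := by
    rw [hz, Limits.zero_app]
    rfl
  rw [NatTrans.comp_app] at h2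
  have h3 : (yonedaHom M b x).app (op a) ((c (Hrep A b)).arrow.app (op a) y) = M.map r.op x := by
    rw [hy]; rfl
  rw [CategoryTheory.comp_apply, h3] at h2
  rw [h2]
  exact (AddMonoidHom.zero_apply x).symm
lemma hmap_comp_eq_zero {a b : A} (r : a ⟶ b) {Z : PMod A} (p : Hrep A b ⟶ Z)
    (hr : p.app (op a) (toH A r) = 0) : Hmap A r ≫ p = 0 := by
  ext a' g
  show p.app a' (g ≫ r) = 0
  have hnat := congrArg (fun (q : (Hrep A b).obj (op a) ⟶ Z.obj (op (unop a'))) => q (toH A r))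
    (p.naturality (g.op : op a ⟶ op (unop a')))
  simp only [AddCommGrpCat.coe_comp, Function.comp_apply] at hnat
  have heq : (Hrep A b).map g.op (toH A r) = g ≫ r := rfl
  rw [heq] at hnat
  rw [hnat, hr, map_zero]

lemma inSub_of_app_zero {C T F : Set (PMod A)} (httf : IsTTFTriple A C T F)
    {c : (M : PMod A) → Subobject M}
    (hc : ∀ M : PMod A, M.Additive → IsTorsionRadicalSub A C M (c M))
    {a b : A} (r : a ⟶ b) {Z : PMod A} (p : Hrep A b ⟶ Z)
    (hker : kernel p ∈ C) (hr : p.app (op a) (toH A r) = 0) :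
    inSub A (c (Hrep A b)) (toH A r) := by
  have w : Hmap A r ≫ p = 0 := hmap_comp_eq_zero r p hr
  have hCk : ((kernelSubobject p : PMod A) ∈ C) :=
    mem_of_iso_left httf.1.1 (kernelSubobjectIso p).symm hker
  have hle : kernelSubobject p ≤ c (Hrep A b) :=
    (hc (Hrep A b) (hrep_additive b)).2 (kernelSubobject p) hCk
  refine ⟨(factorThruKernelSubobject p (Hmap A r) w ≫ Subobject.ofLE _ _ hle).app (op a)
    (toH A (𝟙 a)), ?_⟩
  have harr : (factorThruKernelSubobject p (Hmap A r) w ≫ Subobject.ofLE _ _ hle) ≫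
      (c (Hrep A b)).arrow = Hmap A r := by
    rw [Category.assoc, Subobject.ofLE_arrow, factorThruKernelSubobject_comp_arrow]
  have h2 := congrArg (fun (q : Hrep A a ⟶ Hrep A b) => q.app (op a) (toH A (𝟙 a))) harr
  simp only [NatTrans.comp_app, AddCommGrpCat.coe_comp, Function.comp_apply] at h2
  rw [NatTrans.comp_app, AddCommGrpCat.coe_comp, Function.comp_apply]
  rw [h2]
  show 𝟙 a ≫ r = r
  simp

lemma part1_bwd {C T F : Set (PMod A)} (httf : IsTTFTriple A C T F)
    {c : (M : PMod A) → Subobject M}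
    (hc : ∀ M : PMod A, M.Additive → IsTorsionRadicalSub A C M (c M))
    {a b : A} (r : a ⟶ b) (h : ∀ M ∈ T, M.map r.op = 0) :
    inSub A (c (Hrep A b)) (toH A r) := by
  obtain ⟨Z, p, hZT, hepi, hker⟩ := httf.1.2.2 (Hrep A b) (hrep_additive b)
  refine inSub_of_app_zero httf hc r p hker ?_
  have hnat := congrArg (fun (q : (Hrep A b).obj (op b) ⟶ Z.obj (op a)) => q (toH A (𝟙 b)))
    (p.naturality (r.op : op b ⟶ op a))
  simp only [AddCommGrpCat.coe_comp, Function.comp_apply] at hnat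
  have h1 : (Hrep A b).map r.op (toH A (𝟙 b)) = toH A r := by
    show r ≫ 𝟙 b = r
    simp
  rw [h1] at hnat
  rw [hnat, h Z hZT]
  exact AddMonoidHom.zero_apply _
/-- The ideal of morphisms annihilated by every member of `T`. -/
def Iid (T : Set (PMod A)) (hT : ∀ M ∈ T, M.Additive) : CatIdeal A where
  carrier a b :=
    { carrier := {r | ∀ M ∈ T, M.map r.op = 0}
      zero_mem' := by
        intro M hM
        haveI := hT M hM
        rw [op_zero, Functor.map_zero]
      add_mem' := by
        intro r s hr hs M hM
        haveI := hT M hM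
        rw [op_add, Functor.map_add, hr M hM, hs M hM, add_zero]
      neg_mem' := by
        intro r hr M hM
        haveI := hT M hM
        rw [op_neg, Functor.map_neg, hr M hM, neg_zero] }
  comp_mem_left f g hf M hM := by
    rw [op_comp, Functor.map_comp, hf M hM, comp_zero]
  comp_mem_right f g hg M hM := by
    rw [op_comp, Functor.map_comp, hg M hM, zero_comp]

lemma idealMul_le (I : CatIdeal A) (a b : A) : idealMul A I I a b ≤ I.carrier a b := by
  refine (AddSubgroup.closure_le _).mpr ?_
  rintro u ⟨c, ψ, φ, hψ, hφ, rfl⟩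
  exact I.comp_mem_left ψ φ hψ

lemma idealMul_precomp (I : CatIdeal A) {a a' b : A} (g : a' ⟶ a) {ψ : a ⟶ b}
    (hψ : ψ ∈ idealMul A I I a b) : g ≫ ψ ∈ idealMul A I I a' b := by
  have hle : idealMul A I I a b ≤ (idealMul A I I a' b).comap
      (AddMonoidHom.mk' (fun x => g ≫ x) (fun x y => Preadditive.comp_add _ _ _ _ _ _)) := by
    refine (AddSubgroup.closure_le _).mpr ?_
    rintro u ⟨c, ψ', φ, hψ', hφ, rfl⟩
    show g ≫ (ψ' ≫ φ) ∈ idealMul A I I a' b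
    rw [← Category.assoc]
    exact AddSubgroup.subset_closure ⟨c, g ≫ ψ', φ, I.comp_mem_right g ψ' hψ', hφ, rfl⟩
  exact hle hψ
set_option linter.unusedSectionVars false in
lemma descend_zero {X Z Y : PMod A} (p : X ⟶ Z) (h : X ⟶ Y)
    (hsurj : ∀ a', Function.Surjective (p.app a'))
    (hker : ∀ (a' : Aᵒᵖ) (s : X.obj a'), p.app a' s = 0 → h.app a' s = 0)
    (hzero : ∀ u : Z ⟶ Y, u = 0) : h = 0 := by
  have wd : ∀ (a' : Aᵒᵖ) (s t : X.obj a'), p.app a' s = p.app a' t →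
      h.app a' s = h.app a' t := by
    intro a' s t hst
    have h0 : p.app a' (s - t) = 0 := by rw [map_sub, hst, sub_self]
    have h2 := hker a' _ h0
    rw [map_sub, sub_eq_zero] at h2
    exact h2
  have huf : ∀ (a' : Aᵒᵖ) (s : X.obj a'),
      h.app a' (Function.surjInv (hsurj a') (p.app a' s)) = h.app a' s :=
    fun a' s => wd a' _ s (Function.surjInv_eq (hsurj a') _)
  have hpnat : ∀ {a' a'' : Aᵒᵖ} (f : a' ⟶ a'') (s : X.obj a'),
      Z.map f (p.app a' s) = p.app a'' (X.map f s) := by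
    intro a' a'' f s
    have := congrArg (fun (q : X.obj a' ⟶ Z.obj a'') => q s) (p.naturality f)
    simp only [AddCommGrpCat.coe_comp, Function.comp_apply] at this
    exact this.symm
  have hhnat : ∀ {a' a'' : Aᵒᵖ} (f : a' ⟶ a'') (s : X.obj a'),
      Y.map f (h.app a' s) = h.app a'' (X.map f s) := by
    intro a' a'' f s
    have := congrArg (fun (q : X.obj a' ⟶ Y.obj a'') => q s) (h.naturality f)
    simp only [AddCommGrpCat.coe_comp, Function.comp_apply] at this
    exact this.symm
  let u : Z ⟶ Y :=
    { app := fun a' => AddCommGrpCat.ofHom (AddMonoidHom.mk'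
        (fun z => h.app a' (Function.surjInv (hsurj a') z)) (by
          intro z w
          obtain ⟨s, rfl⟩ := hsurj a' z
          obtain ⟨t, rfl⟩ := hsurj a' w
          show h.app a' (Function.surjInv (hsurj a') (p.app a' s + p.app a' t)) =
            h.app a' (Function.surjInv (hsurj a') (p.app a' s)) +
              h.app a' (Function.surjInv (hsurj a') (p.app a' t))
          rw [← map_add, huf, huf, huf, map_add]))
      naturality := by
        intro a' a'' f
        ext z
        obtain ⟨s, rfl⟩ := hsurj a' z
        show h.app a'' (Function.surjInv (hsurj a'') (Z.map f (p.app a' s))) =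
          Y.map f (h.app a' (Function.surjInv (hsurj a') (p.app a' s)))
        rw [huf, hpnat f s, huf, hhnat f s] }
  have hu := hzero u
  ext a' s
  have h1 : u.app a' (p.app a' s) = h.app a' s := huf a' s
  rw [hu] at h1
  rw [← h1]
  show (0 : Z.obj a' ⟶ Y.obj a') _ = (0 : X ⟶ Y).app a' s
  rfl
/-- Restriction map on the ideal: precomposition. -/
def Irestrict (I : CatIdeal A) (b : A) {a a' : A} (g : a' ⟶ a) :
    (I.carrier a b) →+ (I.carrier a' b) :=
  AddMonoidHom.mk' (fun ψ => ⟨g ≫ (ψ : a ⟶ b), I.comp_mem_right g (ψ : a ⟶ b) ψ.2⟩)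
    (fun x y => by
      apply Subtype.ext
      show g ≫ (((x + y : I.carrier a b) : a ⟶ b)) = g ≫ (x : a ⟶ b) + g ≫ (y : a ⟶ b)
      rw [AddSubgroup.coe_add, Preadditive.comp_add])

/-- The quotient presheaf `I(-,b)/I²(-,b)`. -/
def QF (I : CatIdeal A) (b : A) : PMod A where
  obj a := AddCommGrpCat.of
    ((I.carrier (unop a) b) ⧸ (idealMul A I I (unop a) b).addSubgroupOf (I.carrier (unop a) b))
  map {a a'} f := AddCommGrpCat.ofHom (QuotientAddGroup.map _ _ (Irestrict I b f.unop) (by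
    intro ψ hψ
    rw [AddSubgroup.mem_addSubgroupOf] at hψ
    rw [AddSubgroup.mem_comap, AddSubgroup.mem_addSubgroupOf]
    exact idealMul_precomp I f.unop hψ))
  map_id a := by
    refine AddCommGrpCat.ext fun x => ?_
    refine QuotientAddGroup.induction_on x ?_
    intro ψ
    show QuotientAddGroup.mk (Irestrict I b (𝟙 (unop a)) ψ) = QuotientAddGroup.mk ψ
    congr 1
    apply Subtype.ext
    show 𝟙 (unop a) ≫ (ψ : unop a ⟶ b) = (ψ : unop a ⟶ b)
    simp
  map_comp {a a' a''} f g := by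
    refine AddCommGrpCat.ext fun x => ?_
    refine QuotientAddGroup.induction_on x ?_
    intro ψ
    show QuotientAddGroup.mk (Irestrict I b (f ≫ g).unop ψ) =
      QuotientAddGroup.mk (Irestrict I b g.unop (Irestrict I b f.unop ψ))
    congr 1
    apply Subtype.ext
    show (f ≫ g).unop ≫ (ψ : _ ⟶ b) = g.unop ≫ f.unop ≫ (ψ : _ ⟶ b)
    rw [unop_comp, Category.assoc]

lemma QF_additive (I : CatIdeal A) (b : A) : (QF I b).Additive := by
  constructor
  intro a a' f g
  ext x
  refine QuotientAddGroup.induction_on x ?_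
  intro ψ
  show QuotientAddGroup.mk (Irestrict I b (f + g).unop ψ) =
    ((QF I b).map f + (QF I b).map g) (QuotientAddGroup.mk ψ)
  have : ((QF I b).map f + (QF I b).map g) (QuotientAddGroup.mk ψ) =
      QuotientAddGroup.mk (Irestrict I b f.unop ψ + Irestrict I b g.unop ψ) := by
    rfl
  rw [this]
  congr 1
  apply Subtype.ext
  show (f + g).unop ≫ (ψ : _ ⟶ b) = f.unop ≫ (ψ : _ ⟶ b) + g.unop ≫ (ψ : _ ⟶ b)
  rw [unop_add, Preadditive.add_comp]
lemma rep_hom_zero {C T F : Set (PMod A)} (httf : IsTTFTriple A C T F)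
    {c : (M : PMod A) → Subobject M}
    (hc : ∀ M : PMod A, M.Additive → IsTorsionRadicalSub A C M (c M))
    {a : A} {Y : PMod A} (hY : Y ∈ F) (h : Hrep A a ⟶ Y)
    (hkill : ∀ (a'' : A) (s : a'' ⟶ a), (∀ M ∈ T, M.map s.op = 0) →
      h.app (op a'') (toH A s) = 0) : h = 0 := by
  obtain ⟨Z, p, hZT, hepi, hker⟩ := httf.1.2.2 (Hrep A a) (hrep_additive a)
  have hsurj : ∀ a', Function.Surjective (p.app a') := by
    intro a'
    rw [← AddCommGrpCat.epi_iff_surjective]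
    exact (NatTrans.epi_iff_epi_app p).mp hepi a'
  refine descend_zero p h hsurj ?_ ?_
  · intro a'' s hs
    exact hkill (unop a'') s fun M hM =>
      part1_fwd httf hc (s : unop a'' ⟶ a) (inSub_of_app_zero httf hc _ p hker hs) M hM
  · intro u
    have hYF : Y ∈ {X : PMod A | X.Additive ∧ ∀ Y' ∈ T, ∀ f : Y' ⟶ X, f = 0} :=
      httf.2.2.1 ▸ hY
    exact hYF.2 Z hZT u
lemma QF_mem_T {C T F : Set (PMod A)} (httf : IsTTFTriple A C T F)
    {c : (M : PMod A) → Subobject M}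
    (hc : ∀ M : PMod A, M.Additive → IsTorsionRadicalSub A C M (c M))
    (hT : ∀ M ∈ T, M.Additive) (b : A) :
    QF (Iid T hT) b ∈ T := by
  refine (Set.ext_iff.mp httf.2.1 (QF (Iid T hT) b)).mpr ⟨QF_additive _ b, ?_⟩
  intro Y hY f
  ext a' x
  refine QuotientAddGroup.induction_on x ?_
  intro ψ
  let gψ : Hrep A (unop a') ⟶ QF (Iid T hT) b :=
    { app := fun a'' => AddCommGrpCat.ofHom (AddMonoidHom.mk'
        (fun (g : (Hrep A (unop a')).obj a'') => QuotientAddGroup.mk (Irestrict (Iid T hT) b g ψ))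
        (fun g h => by
          show QuotientAddGroup.mk (Irestrict (Iid T hT) b (g + h) ψ) = _
          have : Irestrict (Iid T hT) b (g + h) ψ = Irestrict (Iid T hT) b g ψ + Irestrict (Iid T hT) b h ψ := by
            apply Subtype.ext
            show (g + h) ≫ (ψ : _ ⟶ b) = g ≫ (ψ : _ ⟶ b) + h ≫ (ψ : _ ⟶ b)
            rw [Preadditive.add_comp]
          rw [this]
          rfl))
      naturality := by
        intro a'' a''' f'
        ext g
        show QuotientAddGroup.mk (Irestrict (Iid T hT) b (f'.unop ≫ g) ψ) =
          (QF (Iid T hT) b).map f' (QuotientAddGroup.mk (Irestrict (Iid T hT) b g ψ))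
        have : (QF (Iid T hT) b).map f' (QuotientAddGroup.mk (Irestrict (Iid T hT) b g ψ)) =
            QuotientAddGroup.mk (Irestrict (Iid T hT) b f'.unop (Irestrict (Iid T hT) b g ψ)) := rfl
        rw [this]
        congr 1
        apply Subtype.ext
        show (f'.unop ≫ g) ≫ (ψ : _ ⟶ b) = f'.unop ≫ g ≫ (ψ : _ ⟶ b)
        exact Category.assoc _ _ _ }
  have hkill : ∀ (a'' : A) (s : a'' ⟶ unop a'), (∀ M ∈ T, M.map s.op = 0) →
      (gψ ≫ f).app (op a'') (toH A s) = 0 := by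
    intro a'' s hs
    have h1 : (gψ ≫ f).app (op a'') (toH A s) =
        f.app (op a'') (QuotientAddGroup.mk (Irestrict (Iid T hT) b s ψ)) := rfl
    have h2 : (QuotientAddGroup.mk (Irestrict (Iid T hT) b s ψ) :
        (QF (Iid T hT) b).obj (op a'')) = 0 := by
      rw [QuotientAddGroup.eq_zero_iff, AddSubgroup.mem_addSubgroupOf]
      exact AddSubgroup.subset_closure ⟨unop a', s, (ψ : unop a' ⟶ b), hs, ψ.2, rfl⟩
    rw [h1, h2]
    exact map_zero _
  have hz : gψ ≫ f = 0 := rep_hom_zero httf hc hY (gψ ≫ f) hkill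
  have h3 : (gψ ≫ f).app (op (unop a')) (toH A (𝟙 (unop a'))) = 0 := by
    rw [hz]
    show (0 : (Hrep A (unop a')).obj (op (unop a')) ⟶ Y.obj (op (unop a'))) _ = 0
    rfl
  have h4 : (gψ ≫ f).app (op (unop a')) (toH A (𝟙 (unop a'))) =
      f.app a' (QuotientAddGroup.mk ψ) := by
    have h5 : (gψ ≫ f).app (op (unop a')) (toH A (𝟙 (unop a'))) =
        f.app (op (unop a')) (QuotientAddGroup.mk (Irestrict (Iid T hT) b (𝟙 (unop a')) ψ)) := rfl
    have h6 : Irestrict (Iid T hT) b (𝟙 (unop a')) ψ = ψ := by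
      apply Subtype.ext
      show 𝟙 (unop a') ≫ (ψ : _ ⟶ b) = (ψ : _ ⟶ b)
      simp
    rw [h5, h6]
  rw [← h4, h3]
  show (0 : ↑(Y.obj a')) = (0 : QF (Iid T hT) b ⟶ Y).app a' (QuotientAddGroup.mk ψ)
  rw [Limits.zero_app]
  rfl
end Aux

theorem statement9 (C T F : Set (PMod A)) (httf : IsTTFTriple A C T F)
    (c : (M : PMod A) → Subobject M)
    (hc : ∀ M : PMod A, M.Additive → IsTorsionRadicalSub A C M (c M)) :
    -- (1) the ideal `c(A)`, with `c(A)(a,b) := c(H_b)(a)`, coincides with `I_T`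
    (∀ (a b : A) (r : a ⟶ b),
      inSub A (c (Hrep A b)) (toH A r) ↔ ∀ M ∈ T, M.map r.op = 0) ∧
    -- (2) the ideal `I_T` is idempotent
    (∃ I : CatIdeal A,
      (∀ a b : A, (I.carrier a b : Set (a ⟶ b)) = {r : a ⟶ b | ∀ M ∈ T, M.map r.op = 0}) ∧
      I.IsIdempotent) := by
  have hT : ∀ M ∈ T, M.Additive := fun M hM =>
    (httf.1.2.1 ▸ hM : M ∈ {X : PMod A | X.Additive ∧ _}).1
  constructor
  · intro a b r
    exact ⟨fun h => part1_fwd httf hc r h, fun h => part1_bwd httf hc r h⟩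
  · refine ⟨Iid T hT, fun a b => rfl, ?_⟩
    intro a b
    refine le_antisymm (idealMul_le _ a b) ?_
    intro r hr
    have hrI : ∀ M ∈ T, M.map r.op = 0 := hr
    obtain ⟨y, hy⟩ := part1_bwd httf hc r hrI
    have key : ∀ (a' : Aᵒᵖ) (z : ((c (Hrep A b) : PMod A)).obj a'),
        (c (Hrep A b)).arrow.app a' z ∈ (Iid T hT).carrier (unop a') b :=
      fun a' z => part1_fwd httf hc _ ⟨z, rfl⟩
    let π : ((c (Hrep A b) : PMod A)) ⟶ QF (Iid T hT) b :=
      { app := fun a' => AddCommGrpCat.ofHom (AddMonoidHom.mk'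
          (fun z => QuotientAddGroup.mk
            (⟨(c (Hrep A b)).arrow.app a' z, key a' z⟩ : (Iid T hT).carrier (unop a') b))
          (fun z w => by
            have he : (⟨(c (Hrep A b)).arrow.app a' (z + w), key a' (z + w)⟩ :
                (Iid T hT).carrier (unop a') b) =
                ⟨(c (Hrep A b)).arrow.app a' z, key a' z⟩ +
                  ⟨(c (Hrep A b)).arrow.app a' w, key a' w⟩ := by
              apply Subtype.ext
              exact map_add _ z w
            show QuotientAddGroup.mk _ = _
            rw [he]
            rfl))
        naturality := by
          intro a' a'' f'
          ext z
          show QuotientAddGroup.mk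
              (⟨(c (Hrep A b)).arrow.app a''
                  (((c (Hrep A b) : PMod A)).map f' z), key a'' _⟩ :
                (Iid T hT).carrier (unop a'') b) =
            (QF (Iid T hT) b).map f' (QuotientAddGroup.mk
              (⟨(c (Hrep A b)).arrow.app a' z, key a' z⟩ : (Iid T hT).carrier (unop a') b))
          have h7 : (QF (Iid T hT) b).map f' (QuotientAddGroup.mk
              (⟨(c (Hrep A b)).arrow.app a' z, key a' z⟩ : (Iid T hT).carrier (unop a') b)) =
              QuotientAddGroup.mk (Irestrict (Iid T hT) b f'.unop
                ⟨(c (Hrep A b)).arrow.app a' z, key a' z⟩) := rfl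
          rw [h7]
          congr 1
          apply Subtype.ext
          have h8 := congrArg
            (fun (q : ((c (Hrep A b) : PMod A)).obj a' ⟶ (Hrep A b).obj a'') => q z)
            ((c (Hrep A b)).arrow.naturality f')
          simp only [AddCommGrpCat.coe_comp, Function.comp_apply] at h8
          exact h8 }
    have hπ : π = 0 := by
      have hCmem := (hc (Hrep A b) (hrep_additive b)).1
      rw [httf.1.1] at hCmem
      exact hCmem.2 (QF (Iid T hT) b) (QF_mem_T httf hc hT b) π
    have h1 : (QuotientAddGroup.mk (⟨r, hr⟩ : (Iid T hT).carrier a b) :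
        ((QF (Iid T hT) b).obj (op a))) = 0 := by
      have h2 : π.app (op a) y =
          QuotientAddGroup.mk (⟨r, hr⟩ : (Iid T hT).carrier a b) := by
        show QuotientAddGroup.mk
            (⟨(c (Hrep A b)).arrow.app (op a) y, key (op a) y⟩ : (Iid T hT).carrier a b) = _
        congr 1
        exact Subtype.ext hy
      rw [← h2, hπ]
      show (0 : ((c (Hrep A b) : PMod A)).obj (op a) ⟶ (QF (Iid T hT) b).obj (op a)) y = 0
      rfl
    rw [QuotientAddGroup.eq_zero_iff, AddSubgroup.mem_addSubgroupOf] at h1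
    exact h1
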